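/- Let G be a locally graded non-sofic group. Then G contains a finitely generated non-sofic subgroup H together with a strictly decreasing sequence H = N_0 > N_1 > N_2 > ⋯ of finitely generated normal subgroups of H such that: each N_i is non-sofic; the intersection R of all the N_i is nontrivial and is contained in the profinite residual of H; and H/R is residually finite. -/

import Mathlib

/-- The normalized Hamming distance between two permutations of `Fin n`:
the number of points where they differ, divided by `n`. -/
noncomputable def permHammingDist {n : ℕ} (σ τ : Equiv.Perm (Fin n)) : ℝ :=
  ((Finset.univ.filter fun i => σ i ≠ τ i).card : ℝ) / n

/-- A group `G` is sofic if for every finite subset `F ⊆ G` and every `ε > 0` there exist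
`n ≥ 1` and a map `θ` from `F` to `Sym(Fin n)` (extended to all of `G`) such that:
(i) `θ` is an `ε`-approximate homomorphism on `F`;
(ii) `θ` almost sends the identity to the identity;
(iii) distinct elements of `F` are sent to permutations at Hamming distance at least `1/4`. -/
def IsSofic (G : Type*) [Group G] : Prop :=
  ∀ (F : Finset G) (ε : ℝ), 0 < ε →
    ∃ n : ℕ, 1 ≤ n ∧ ∃ θ : G → Equiv.Perm (Fin n),
      (∀ g h : G, g ∈ F → h ∈ F → g * h ∈ F →
        permHammingDist (θ g * θ h) (θ (g * h)) < ε) ∧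
      ((1 : G) ∈ F → permHammingDist (θ 1) 1 < ε) ∧
      (∀ x y : G, x ∈ F → y ∈ F → x ≠ y → 1 / 4 ≤ permHammingDist (θ x) (θ y))

/-- A group is minimal non-sofic if it is not sofic but every proper subgroup is sofic. -/
def IsMinimalNonSofic (G : Type*) [Group G] : Prop :=
  ¬ IsSofic G ∧ ∀ H : Subgroup G, H ≠ ⊤ → IsSofic H

/-- A group is locally graded if every nontrivial finitely generated subgroup has a
proper subgroup of finite index. -/
def IsLocallyGraded (G : Type*) [Group G] : Prop :=
  ∀ H : Subgroup G, H ≠ ⊥ → H.FG → ∃ K : Subgroup H, K ≠ ⊤ ∧ K.FiniteIndex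

open Finset

noncomputable def hd {X : Type*} [Fintype X] [DecidableEq X] (σ τ : Equiv.Perm X) : ℝ :=
  ((Finset.univ.filter fun i => σ i ≠ τ i).card : ℝ) / (Fintype.card X)

lemma permHammingDist_eq_hd {n : ℕ} (σ τ : Equiv.Perm (Fin n)) :
    permHammingDist σ τ = hd σ τ := by
  unfold permHammingDist hd
  rw [Fintype.card_fin]

lemma hd_nonneg {X : Type*} [Fintype X] [DecidableEq X] (σ τ : Equiv.Perm X) : 0 ≤ hd σ τ := by
  unfold hd; positivity

lemma hd_self {X : Type*} [Fintype X] [DecidableEq X] (σ : Equiv.Perm X) : hd σ σ = 0 := by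
  simp [hd]

lemma hd_le_one {X : Type*} [Fintype X] [DecidableEq X] (σ τ : Equiv.Perm X) : hd σ τ ≤ 1 := by
  unfold hd
  apply div_le_one_of_le₀
  · exact_mod_cast (Finset.card_le_card (Finset.filter_subset _ _)).trans_eq Finset.card_univ
  · positivity

lemma permCongr_mul {X Y : Type*} (e : X ≃ Y) (σ τ : Equiv.Perm X) :
    (e.permCongr σ) * (e.permCongr τ) = e.permCongr (σ * τ) := by
  ext y
  simp [Equiv.permCongr_apply]

lemma permCongr_one {X Y : Type*} (e : X ≃ Y) : e.permCongr 1 = 1 := by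
  ext y; simp

lemma hd_congr {X Y : Type*} [Fintype X] [Fintype Y] [DecidableEq X] [DecidableEq Y] (e : X ≃ Y) (σ τ : Equiv.Perm X) :
    hd (e.permCongr σ) (e.permCongr τ) = hd σ τ := by
  have hc : (Finset.univ.filter fun y => e.permCongr σ y ≠ e.permCongr τ y).card
      = (Finset.univ.filter fun i => σ i ≠ τ i).card := by
    apply Finset.card_equiv e.symm
    intro y
    simp [Equiv.permCongr_apply]
  unfold hd
  rw [Fintype.card_congr e.symm]
  congr 1
  norm_cast

/-! ### Sofic witnesses -/

def SoficWitness (G : Type*) [Group G] (F : Finset G) (ε s : ℝ) : Prop :=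
  ∃ n : ℕ, 1 ≤ n ∧ ∃ θ : G → Equiv.Perm (Fin n),
    (∀ g h : G, g ∈ F → h ∈ F → g * h ∈ F →
      permHammingDist (θ g * θ h) (θ (g * h)) < ε) ∧
    ((1 : G) ∈ F → permHammingDist (θ 1) 1 < ε) ∧
    (∀ x y : G, x ∈ F → y ∈ F → x ≠ y → s ≤ permHammingDist (θ x) (θ y))

lemma isSofic_iff_witness (G : Type*) [Group G] :
    IsSofic G ↔ ∀ (F : Finset G) (ε : ℝ), 0 < ε → SoficWitness G F ε (1/4) := Iff.rfl

lemma soficWitness_of_fintype {G : Type*} [Group G] {F : Finset G} {ε s : ℝ}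
    {X : Type*} [Fintype X] [DecidableEq X] [Nonempty X] (θ : G → Equiv.Perm X)
    (h1 : ∀ g h : G, g ∈ F → h ∈ F → g * h ∈ F → hd (θ g * θ h) (θ (g * h)) < ε)
    (h2 : (1 : G) ∈ F → hd (θ 1) 1 < ε)
    (h3 : ∀ x y : G, x ∈ F → y ∈ F → x ≠ y → s ≤ hd (θ x) (θ y)) :
    SoficWitness G F ε s := by
  let e := Fintype.equivFin X
  refine ⟨Fintype.card X, Fintype.card_pos, fun g => e.permCongr (θ g), ?_, ?_, ?_⟩
  · intro g h hg hh hgh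
    rw [permHammingDist_eq_hd, permCongr_mul, hd_congr]
    exact h1 g h hg hh hgh
  · intro h1F
    rw [permHammingDist_eq_hd, show (1 : Equiv.Perm (Fin (Fintype.card X))) = e.permCongr 1 from
      (permCongr_one e).symm, hd_congr]
    exact h2 h1F
  · intro x y hx hy hxy
    rw [permHammingDist_eq_hd, hd_congr]
    exact h3 x y hx hy hxy

/-! ### Amplification -/

def powPerm {X : Type*} (k : ℕ) (σ : Equiv.Perm X) : Equiv.Perm (Fin k → X) :=
  Equiv.piCongrRight fun _ => σ

lemma powPerm_apply {X : Type*} (k : ℕ) (σ : Equiv.Perm X) (v : Fin k → X) (i : Fin k) :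
    powPerm k σ v i = σ (v i) := rfl

lemma powPerm_mul {X : Type*} (k : ℕ) (σ τ : Equiv.Perm X) :
    powPerm k σ * powPerm k τ = powPerm k (σ * τ) :=
  Equiv.ext fun v => funext fun i => rfl

lemma powPerm_one {X : Type*} (k : ℕ) : powPerm k (1 : Equiv.Perm X) = 1 :=
  Equiv.ext fun v => funext fun i => rfl

lemma hd_powPerm {X : Type*} [Fintype X] [DecidableEq X] [Nonempty X] (k : ℕ) (σ τ : Equiv.Perm X) :
    hd (powPerm k σ) (powPerm k τ) = 1 - (1 - hd σ τ) ^ k := by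
  set n := Fintype.card X with hn
  have hn0 : 0 < n := Fintype.card_pos
  set a := (Finset.univ.filter fun i => σ i = τ i).card with ha
  set c := (Finset.univ.filter fun i => σ i ≠ τ i).card with hc
  have hac : a + c = n := by
    rw [ha, hc, hn, ← Finset.card_univ]
    exact Finset.card_filter_add_card_filter_not _
  have hpow : ∀ (v : Fin k → X), (powPerm k σ v = powPerm k τ v) ↔ ∀ i, σ (v i) = τ (v i) := by
    intro v
    rw [funext_iff]
    rfl
  -- count of agreeing tuples
  have hagree : (Finset.univ.filter fun v : Fin k → X => powPerm k σ v = powPerm k τ v).card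
      = a ^ k := by
    have : (Finset.univ.filter fun v : Fin k → X => powPerm k σ v = powPerm k τ v)
        = Fintype.piFinset (fun _ : Fin k => Finset.univ.filter fun x => σ x = τ x) := by
      ext v
      simp [Fintype.mem_piFinset, hpow v]
    rw [this, Fintype.card_piFinset]
    simp [ha]
  have hcard : (Finset.univ : Finset (Fin k → X)).card = n ^ k := by
    simp [hn, Finset.card_univ]
  have hsplit : (Finset.univ.filter fun v : Fin k → X => powPerm k σ v ≠ powPerm k τ v).card
      = n ^ k - a ^ k := by
    have h2 := Finset.card_filter_add_card_filter_not
      (s := (Finset.univ : Finset (Fin k → X)))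
      (p := fun v => powPerm k σ v = powPerm k τ v)
    rw [hcard, hagree] at h2
    beta_reduce at h2
    simp only [ne_eq]
    omega
  have hak : a ≤ n := by omega
  have hc' : (c : ℝ) = (n : ℝ) - a := by
    have : (a : ℝ) + c = n := by exact_mod_cast hac
    linarith
  have hdn : hd σ τ = ((n : ℝ) - a) / n := by
    rw [hd, ← hc, ← hn, hc']
  have hne : (n : ℝ) ≠ 0 := by positivity
  have hhd : hd (powPerm k σ) (powPerm k τ) = ((n : ℝ) ^ k - (a : ℝ) ^ k) / (n : ℝ) ^ k := by
    rw [hd]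
    have hcX : (Fintype.card (Fin k → X) : ℝ) = (n : ℝ) ^ k := by
      rw [← Finset.card_univ, hcard]; push_cast; ring
    rw [hcX]
    congr 1
    rw [hsplit]
    have : a ^ k ≤ n ^ k := Nat.pow_le_pow_left hak k
    push_cast [Nat.cast_sub this]
    ring
  rw [hhd, hdn]
  have h1 : (1 : ℝ) - ((n : ℝ) - a) / n = (a : ℝ) / n := by field_simp; ring
  rw [h1, div_pow, sub_div, div_self (pow_ne_zero _ hne)]

lemma soficWitness_amplify {G : Type*} [Group G] (F : Finset G) {s : ℝ} (hs0 : 0 < s)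
    (hs1 : s ≤ 1) (h : ∀ δ : ℝ, 0 < δ → SoficWitness G F δ s) :
    ∀ ε : ℝ, 0 < ε → SoficWitness G F ε (1/4) := by
  intro ε hε
  obtain ⟨k, hk⟩ : ∃ k : ℕ, (1 - s) ^ k < 3/4 := by
    apply exists_pow_lt_of_lt_one (by norm_num)
    linarith
  have hkpos : 0 < k := by
    rcases Nat.eq_zero_or_pos k with h0 | h0
    · rw [h0] at hk; norm_num at hk
    · exact h0
  have hkR : (0 : ℝ) < k := by exact_mod_cast hkpos
  obtain ⟨n, hn, θ, W1, W2, W3⟩ := h (ε / k) (by positivity)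
  haveI : Nonempty (Fin n) := ⟨⟨0, hn⟩⟩
  have key : ∀ σ τ : Equiv.Perm (Fin n), hd σ τ < ε / k →
      hd (powPerm k σ) (powPerm k τ) < ε := by
    intro σ τ hστ
    rw [hd_powPerm]
    have hb : 1 - (k : ℝ) * hd σ τ ≤ (1 - hd σ τ) ^ k := by
      have := one_add_mul_le_pow (a := -(hd σ τ)) (by nlinarith [hd_le_one σ τ]) k
      calc 1 - (k : ℝ) * hd σ τ = 1 + k * (-(hd σ τ)) := by ring
        _ ≤ (1 + -(hd σ τ)) ^ k := this
        _ = (1 - hd σ τ) ^ k := by ring_nf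
    have : (k : ℝ) * hd σ τ < k * (ε / k) := by
      exact mul_lt_mul_of_pos_left hστ hkR
    rw [mul_div_cancel₀ _ (ne_of_gt hkR)] at this
    linarith
  have wit : SoficWitness G F ε (1/4) := by
    apply soficWitness_of_fintype (X := Fin k → Fin n) (fun g => powPerm k (θ g))
    · intro g h' hg hh hgh
      rw [powPerm_mul]
      apply key
      rw [← permHammingDist_eq_hd]
      exact W1 g h' hg hh hgh
    · intro h1F
      rw [show (1 : Equiv.Perm (Fin k → Fin n)) = powPerm k 1 from (powPerm_one k).symm]
      apply key
      rw [← permHammingDist_eq_hd]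
      exact W2 h1F
    · intro x y hx hy hxy
      rw [hd_powPerm]
      have hsep : s ≤ hd (θ x) (θ y) := by
        rw [← permHammingDist_eq_hd]; exact W3 x y hx hy hxy
      have h1 : (1 - hd (θ x) (θ y)) ^ k ≤ (1 - s) ^ k := by
        apply pow_le_pow_left₀
        · linarith [hd_le_one (θ x) (θ y)]
        · linarith
      linarith
  exact wit

/-! ### Residually finite groups are sofic -/

lemma isSofic_of_residuallyFinite {G : Type*} [Group G]
    (hrf : ∀ g : G, g ≠ 1 → ∃ K : Subgroup G, K.Normal ∧ K.FiniteIndex ∧ g ∉ K) :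
    IsSofic G := by
  intro F ε hε
  have hex : ∀ p : G × G, ∃ K : Subgroup G, K.Normal ∧ K.FiniteIndex ∧
      (p.1 ≠ p.2 → p.1⁻¹ * p.2 ∉ K) := by
    intro p
    by_cases hp : p.1 = p.2
    · exact ⟨⊤, inferInstance, inferInstance, fun hne => absurd hp hne⟩
    · obtain ⟨K, h1, h2, h3⟩ := hrf (p.1⁻¹ * p.2) (by
        intro hcon
        apply hp
        rw [inv_mul_eq_one] at hcon
        exact hcon)
      exact ⟨K, h1, h2, fun _ => h3⟩
  choose Kf hKn hKfi hKsep using hex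
  let N : Subgroup G := ⨅ p : (↥F × ↥F), Kf ((p.1 : G), (p.2 : G))
  haveI hNfi : N.FiniteIndex := Subgroup.finiteIndex_iInf fun p => hKfi _
  haveI hNn : N.Normal := by
    constructor
    intro n hn g
    rw [Subgroup.mem_iInf] at hn ⊢
    intro p
    exact (hKn _).conj_mem _ (hn p) g
  letI : Fintype (G ⧸ N) := N.fintypeQuotientOfFiniteIndex
  letI : DecidableEq (G ⧸ N) := Classical.decEq _
  let φ : G →* Equiv.Perm (G ⧸ N) :=
    (MulAction.toPermHom (G ⧸ N) (G ⧸ N)).comp (QuotientGroup.mk' N)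
  have wit : SoficWitness G F ε (1/4) := by
    apply soficWitness_of_fintype (X := G ⧸ N) (fun g => φ g)
    · intro g h hg hh hgh
      rw [← map_mul]
      rw [hd_self]
      exact hε
    · intro h1F
      rw [map_one, hd_self]
      exact hε
    · intro x y hx hy hxy
      have hmk : (QuotientGroup.mk x : G ⧸ N) ≠ QuotientGroup.mk y := by
        intro hcon
        rw [QuotientGroup.eq] at hcon
        have hle : N ≤ Kf (x, y) := iInf_le (fun p : ↥F × ↥F => Kf ((p.1 : G), (p.2 : G))) (⟨x, hx⟩, ⟨y, hy⟩)
        exact hKsep (x, y) hxy (hle hcon)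
      have hall : ∀ q : G ⧸ N, φ x q ≠ φ y q := by
        intro q hcon
        apply hmk
        have : (QuotientGroup.mk x : G ⧸ N) * q = QuotientGroup.mk y * q := hcon
        exact mul_right_cancel this
      have : (Finset.univ.filter fun q : G ⧸ N => φ x q ≠ φ y q) = Finset.univ := by
        apply Finset.filter_true_of_mem
        intro q _
        exact hall q
      unfold hd
      rw [this, Finset.card_univ]
      rw [div_self (by exact_mod_cast Fintype.card_ne_zero)]
      norm_num
  exact wit

/-! ### Soficity along injective homomorphisms and locality -/

lemma isSofic_of_injective {G H : Type*} [Group G] [Group H] (f : G →* H)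
    (hf : Function.Injective f) (hH : IsSofic H) : IsSofic G := by
  classical
  intro F ε hε
  obtain ⟨n, hn, θ, W1, W2, W3⟩ := hH (F.image f) ε hε
  refine ⟨n, hn, fun g => θ (f g), ?_, ?_, ?_⟩
  · intro g h hg hh hgh
    beta_reduce
    have := W1 (f g) (f h) (Finset.mem_image_of_mem f hg) (Finset.mem_image_of_mem f hh)
      (by rw [← map_mul]; exact Finset.mem_image_of_mem f hgh)
    rwa [← map_mul] at this
  · intro h1F
    show permHammingDist (θ (f 1)) 1 < ε
    rw [map_one]
    exact W2 (by rw [← map_one f]; exact Finset.mem_image_of_mem f h1F)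
  · intro x y hx hy hxy
    exact W3 (f x) (f y) (Finset.mem_image_of_mem f hx) (Finset.mem_image_of_mem f hy)
      (fun hcon => hxy (hf hcon))

lemma isSofic_of_mulEquiv {G H : Type*} [Group G] [Group H] (e : G ≃* H) (hH : IsSofic H) :
    IsSofic G :=
  isSofic_of_injective e.toMonoidHom e.injective hH

lemma isSofic_of_forall_fg {G : Type*} [Group G]
    (h : ∀ H : Subgroup G, H.FG → IsSofic H) : IsSofic G := by
  classical
  intro F ε hε
  set H : Subgroup G := Subgroup.closure (F : Set G) with hHdef
  have hFG : H.FG := ⟨F, rfl⟩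
  have hmem : ∀ x ∈ F, x ∈ H := fun x hx => Subgroup.subset_closure hx
  let F' : Finset ↥H := F.attach.image (fun x : {a : G // a ∈ F} => (⟨x.1, hmem x.1 x.2⟩ : ↥H))
  obtain ⟨n, hn, θ, W1, W2, W3⟩ := h H hFG F' ε hε
  refine ⟨n, hn, fun g => if hg : g ∈ H then θ ⟨g, hg⟩ else 1, ?_, ?_, ?_⟩
  · intro g h' hg hh hgh
    show permHammingDist
      ((if hg : g ∈ H then θ ⟨g, hg⟩ else 1) * (if hh : h' ∈ H then θ ⟨h', hh⟩ else 1))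
      (if hgh : g * h' ∈ H then θ ⟨g * h', hgh⟩ else 1) < ε
    rw [dif_pos (hmem g hg), dif_pos (hmem h' hh), dif_pos (hmem _ hgh)]
    exact W1 ⟨g, hmem g hg⟩ ⟨h', hmem h' hh⟩
      (Finset.mem_image.2 ⟨⟨g, hg⟩, Finset.mem_attach _ _, rfl⟩)
      (Finset.mem_image.2 ⟨⟨h', hh⟩, Finset.mem_attach _ _, rfl⟩)
      (Finset.mem_image.2 ⟨⟨g * h', hgh⟩, Finset.mem_attach _ _, rfl⟩)
  · intro h1F
    show permHammingDist (if hg : (1 : G) ∈ H then θ ⟨1, hg⟩ else 1) 1 < ε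
    rw [dif_pos (hmem 1 h1F)]
    exact W2 (Finset.mem_image.2 ⟨⟨1, h1F⟩, Finset.mem_attach _ _, rfl⟩)
  · intro x y hx hy hxy
    show 1/4 ≤ permHammingDist (if hg : x ∈ H then θ ⟨x, hg⟩ else 1)
      (if hg : y ∈ H then θ ⟨y, hg⟩ else 1)
    rw [dif_pos (hmem x hx), dif_pos (hmem y hy)]
    exact W3 ⟨x, hmem x hx⟩ ⟨y, hmem y hy⟩
      (Finset.mem_image.2 ⟨⟨x, hx⟩, Finset.mem_attach _ _, rfl⟩)
      (Finset.mem_image.2 ⟨⟨y, hy⟩, Finset.mem_attach _ _, rfl⟩)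
      (fun hcon => hxy (congrArg Subtype.val hcon))

/-! ### Induction of sofic approximations from a finite-index subgroup -/

lemma card_filter_prod {α β : Type*} [Fintype α] [Fintype β] (p : α × β → Prop)
    [DecidablePred p] :
    (Finset.univ.filter p).card = ∑ a : α, (Finset.univ.filter fun b => p (a, b)).card := by
  rw [Finset.card_filter, Fintype.sum_prod_type]
  exact Finset.sum_congr rfl fun a _ => (Finset.card_filter _ _).symm

noncomputable def coc {H : Type*} [Group H] (K : Subgroup H) (g : H) (q : H ⧸ K) : K :=
  ⟨(Quotient.out (g • q))⁻¹ * g * Quotient.out q, by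
    rw [mul_assoc, ← QuotientGroup.eq, QuotientGroup.out_eq']
    exact (MulAction.Quotient.mk_smul_out K g q).symm⟩

lemma coc_mul {H : Type*} [Group H] (K : Subgroup H) (g h : H) (q : H ⧸ K) :
    coc K (g * h) q = coc K g (h • q) * coc K h q := by
  apply Subtype.ext
  show (Quotient.out ((g * h) • q))⁻¹ * (g * h) * Quotient.out q
    = ((Quotient.out (g • h • q))⁻¹ * g * Quotient.out (h • q))
      * ((Quotient.out (h • q))⁻¹ * h * Quotient.out q)
  rw [mul_smul]
  group

lemma coc_one {H : Type*} [Group H] (K : Subgroup H) (q : H ⧸ K) : coc K 1 q = 1 := by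
  apply Subtype.ext
  show (Quotient.out ((1 : H) • q))⁻¹ * 1 * Quotient.out q = 1
  rw [one_smul]
  group

noncomputable def indPerm {H : Type*} [Group H] (K : Subgroup H) {n : ℕ}
    (θ : ↥K → Equiv.Perm (Fin n)) (g : H) : Equiv.Perm ((H ⧸ K) × Fin n) where
  toFun p := (g • p.1, θ (coc K g p.1) p.2)
  invFun p := (g⁻¹ • p.1, (θ (coc K g (g⁻¹ • p.1)))⁻¹ p.2)
  left_inv p := by simp
  right_inv p := by simp

lemma indPerm_apply {H : Type*} [Group H] (K : Subgroup H) {n : ℕ}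
    (θ : ↥K → Equiv.Perm (Fin n)) (g : H) (p : (H ⧸ K) × Fin n) :
    indPerm K θ g p = (g • p.1, θ (coc K g p.1) p.2) := rfl

lemma isSofic_of_finiteIndex {H : Type*} [Group H] (K : Subgroup H) [K.FiniteIndex]
    (hK : IsSofic K) : IsSofic H := by
  classical
  intro F ε hε
  letI : Fintype (H ⧸ K) := K.fintypeQuotientOfFiniteIndex
  set m := Fintype.card (H ⧸ K) with hm
  have hm0 : 0 < m := Fintype.card_pos
  have hmR : (0 : ℝ) < m := by exact_mod_cast hm0
  have hs0 : (0 : ℝ) < 1 / (4 * m) := by positivity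
  have hs1 : (1 : ℝ) / (4 * m) ≤ 1 := by
    rw [div_le_one (by positivity)]
    have : (1 : ℝ) ≤ m := by exact_mod_cast hm0
    linarith
  have W : ∀ δ : ℝ, 0 < δ → SoficWitness H F δ (1 / (4 * m)) := by
    intro δ hδ
    set FK : Finset ↥K :=
      (F ×ˢ (Finset.univ : Finset (H ⧸ K))).image (fun p => coc K p.1 p.2) with hFK
    have hcocF : ∀ g ∈ F, ∀ q : H ⧸ K, coc K g q ∈ FK := by
      intro g hg q
      exact Finset.mem_image.2 ⟨(g, q), Finset.mem_product.2 ⟨hg, Finset.mem_univ _⟩, rfl⟩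
    obtain ⟨n, hn, θ, W1, W2, W3⟩ := hK FK δ hδ
    have hnR : (0 : ℝ) < n := by exact_mod_cast hn
    haveI : Nonempty (H ⧸ K) := ⟨QuotientGroup.mk 1⟩
    haveI : Nonempty (Fin n) := ⟨⟨0, hn⟩⟩
    set Θ := indPerm K θ with hΘ
    -- general formula for hd on the product
    have key : ∀ π ρ : Equiv.Perm ((H ⧸ K) × Fin n),
        hd π ρ = (∑ q : H ⧸ K,
          ((Finset.univ.filter fun x : Fin n => π (q, x) ≠ ρ (q, x)).card : ℝ)) / (m * n) := by
      intro π ρ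
      unfold hd
      rw [card_filter_prod (fun p => π p ≠ ρ p)]
      rw [Fintype.card_prod, Fintype.card_fin, ← hm]
      push_cast
      ring_nf
    apply soficWitness_of_fintype (X := (H ⧸ K) × Fin n) (fun g => Θ g)
    · -- approximate multiplicativity
      intro g h hg hh hgh
      show hd (Θ g * Θ h) (Θ (g * h)) < δ
      rw [key]
      have hterm : ∀ q : H ⧸ K,
          ((Finset.univ.filter fun x : Fin n =>
            (Θ g * Θ h) (q, x) ≠ Θ (g * h) (q, x)).card : ℝ) < δ * n := by
        intro q
        have hfilt : (Finset.univ.filter fun x : Fin n =>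
            (Θ g * Θ h) (q, x) ≠ Θ (g * h) (q, x))
            = Finset.univ.filter fun x : Fin n =>
              (θ (coc K g (h • q)) * θ (coc K h q)) x ≠ θ (coc K g (h • q) * coc K h q) x := by
          apply Finset.filter_congr
          intro x _
          have h1 : (Θ g * Θ h) (q, x) = (g • h • q, θ (coc K g (h • q)) (θ (coc K h q) x)) := by
            rw [hΘ]
            rfl
          have h2 : Θ (g * h) (q, x) = (g • h • q, θ (coc K g (h • q) * coc K h q) x) := by
            rw [hΘ, indPerm_apply, ← coc_mul, mul_smul]
          rw [h1, h2]
          constructor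
          · intro hne hcon
            apply hne
            rw [Prod.mk.injEq]
            exact ⟨rfl, by rw [← hcon]; rfl⟩
          · intro hne hcon
            apply hne
            rw [Prod.mk.injEq] at hcon
            exact hcon.2
        rw [hfilt]
        have := W1 (coc K g (h • q)) (coc K h q) (hcocF g hg _) (hcocF h hh _)
          (by rw [← coc_mul]; exact hcocF _ hgh q)
        rw [permHammingDist_eq_hd] at this
        unfold hd at this
        rw [Fintype.card_fin] at this
        calc ((Finset.univ.filter fun x : Fin n =>
              (θ (coc K g (h • q)) * θ (coc K h q)) x ≠ θ (coc K g (h • q) * coc K h q) x).card : ℝ)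
            = ((Finset.univ.filter fun x : Fin n =>
              (θ (coc K g (h • q)) * θ (coc K h q)) x ≠ θ (coc K g (h • q) * coc K h q) x).card : ℝ)
              / n * n := by field_simp
          _ < δ * n := by
              apply mul_lt_mul_of_pos_right _ hnR
              exact this
      have hsum : (∑ q : H ⧸ K, ((Finset.univ.filter fun x : Fin n =>
          (Θ g * Θ h) (q, x) ≠ Θ (g * h) (q, x)).card : ℝ)) < m * (δ * n) := by
        have := Finset.sum_lt_sum_of_nonempty (s := (Finset.univ : Finset (H ⧸ K)))
          (Finset.univ_nonempty) (fun q _ => hterm q)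
        simpa [Finset.sum_const, Finset.card_univ, ← hm] using this
      rw [div_lt_iff₀ (by positivity)]
      calc (∑ q : H ⧸ K, ((Finset.univ.filter fun x : Fin n =>
            (Θ g * Θ h) (q, x) ≠ Θ (g * h) (q, x)).card : ℝ)) < m * (δ * n) := hsum
        _ = δ * (m * n) := by ring
    · -- identity
      intro h1F
      show hd (Θ 1) 1 < δ
      rw [key]
      have hterm : ∀ q : H ⧸ K,
          ((Finset.univ.filter fun x : Fin n => Θ 1 (q, x) ≠ (1 : Equiv.Perm ((H ⧸ K) × Fin n)) (q, x)).card : ℝ)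
            < δ * n := by
        intro q
        have hfilt : (Finset.univ.filter fun x : Fin n =>
              Θ 1 (q, x) ≠ (1 : Equiv.Perm ((H ⧸ K) × Fin n)) (q, x))
            = Finset.univ.filter fun x : Fin n => θ 1 x ≠ (1 : Equiv.Perm (Fin n)) x := by
          apply Finset.filter_congr
          intro x _
          have h1 : Θ 1 (q, x) = (q, θ (coc K 1 q) x) := by
            rw [hΘ, indPerm_apply, one_smul]
          rw [h1, coc_one]
          show (q, θ 1 x) ≠ (q, x) ↔ θ 1 x ≠ x
          constructor
          · intro hne hcon
            exact hne (by rw [hcon])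
          · intro hne hcon
            rw [Prod.mk.injEq] at hcon
            exact hne hcon.2
        rw [hfilt]
        have := W2 (by rw [← coc_one K (QuotientGroup.mk 1 : H ⧸ K)]; exact hcocF 1 h1F _)
        rw [permHammingDist_eq_hd] at this
        unfold hd at this
        rw [Fintype.card_fin] at this
        calc ((Finset.univ.filter fun x : Fin n => θ 1 x ≠ (1 : Equiv.Perm (Fin n)) x).card : ℝ)
            = ((Finset.univ.filter fun x : Fin n =>
                θ 1 x ≠ (1 : Equiv.Perm (Fin n)) x).card : ℝ) / n * n := by field_simp
          _ < δ * n := mul_lt_mul_of_pos_right this hnR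
      have hsum := Finset.sum_lt_sum_of_nonempty (s := (Finset.univ : Finset (H ⧸ K)))
        (Finset.univ_nonempty) (fun q _ => hterm q)
      rw [div_lt_iff₀ (by positivity)]
      calc _ < _ := hsum
        _ = δ * (m * n) := by
            rw [Finset.sum_const, Finset.card_univ, ← hm]
            push_cast
            ring
    · -- separation
      intro x y hx hy hxy
      show 1 / (4 * m) ≤ hd (Θ x) (Θ y)
      rw [key]
      set q₀ : H ⧸ K := QuotientGroup.mk 1 with hq₀
      have hsum_ge : ((Finset.univ.filter fun x' : Fin n =>
          Θ x (q₀, x') ≠ Θ y (q₀, x')).card : ℝ)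
          ≤ ∑ q : H ⧸ K, ((Finset.univ.filter fun x' : Fin n =>
            Θ x (q, x') ≠ Θ y (q, x')).card : ℝ) := by
        apply Finset.single_le_sum (f := fun q => ((Finset.univ.filter fun x' : Fin n =>
          Θ x (q, x') ≠ Θ y (q, x')).card : ℝ))
        · intro q _
          positivity
        · exact Finset.mem_univ q₀
      have hblock : (n : ℝ) / 4 ≤ ((Finset.univ.filter fun x' : Fin n =>
          Θ x (q₀, x') ≠ Θ y (q₀, x')).card : ℝ) := by
        by_cases hcase : x • q₀ = y • q₀
        · -- same coset: use separation of θ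
          have hcocne : coc K x q₀ ≠ coc K y q₀ := by
            intro hcon
            apply hxy
            have := congrArg Subtype.val hcon
            show _
            have h1 : (Quotient.out (x • q₀))⁻¹ * x * Quotient.out q₀
                = (Quotient.out (y • q₀))⁻¹ * y * Quotient.out q₀ := this
            rw [hcase] at h1
            have h2 := mul_right_cancel h1
            exact mul_left_cancel h2
          have hsub : (Finset.univ.filter fun x' : Fin n =>
              θ (coc K x q₀) x' ≠ θ (coc K y q₀) x')
              ⊆ Finset.univ.filter fun x' : Fin n => Θ x (q₀, x') ≠ Θ y (q₀, x') := by
            intro x' hx'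
            rw [Finset.mem_filter] at hx' ⊢
            refine ⟨Finset.mem_univ _, ?_⟩
            intro hcon
            apply hx'.2
            rw [hΘ, indPerm_apply, indPerm_apply, Prod.mk.injEq] at hcon
            exact hcon.2
          have hW3 := W3 (coc K x q₀) (coc K y q₀) (hcocF x hx q₀) (hcocF y hy q₀) hcocne
          rw [permHammingDist_eq_hd] at hW3
          unfold hd at hW3
          rw [Fintype.card_fin] at hW3
          have hcardle : ((Finset.univ.filter fun x' : Fin n =>
              θ (coc K x q₀) x' ≠ θ (coc K y q₀) x').card : ℝ)
              ≤ ((Finset.univ.filter fun x' : Fin n =>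
                Θ x (q₀, x') ≠ Θ y (q₀, x')).card : ℝ) := by
            exact_mod_cast Finset.card_le_card hsub
          have : (n : ℝ) / 4 ≤ ((Finset.univ.filter fun x' : Fin n =>
              θ (coc K x q₀) x' ≠ θ (coc K y q₀) x').card : ℝ) := by
            rw [le_div_iff₀ hnR] at hW3
            linarith
          linarith
        · -- different cosets: whole block differs
          have hfilt : (Finset.univ.filter fun x' : Fin n =>
              Θ x (q₀, x') ≠ Θ y (q₀, x')) = Finset.univ := by
            apply Finset.filter_true_of_mem
            intro x' _
            intro hcon
            apply hcase
            rw [hΘ, indPerm_apply, indPerm_apply, Prod.mk.injEq] at hcon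
            exact hcon.1
          rw [hfilt, Finset.card_univ, Fintype.card_fin]
          have : (1 : ℝ) ≤ n := by exact_mod_cast hn
          linarith
      have hfinal : (n : ℝ) / 4 ≤ ∑ q : H ⧸ K, ((Finset.univ.filter fun x' : Fin n =>
          Θ x (q, x') ≠ Θ y (q, x')).card : ℝ) := le_trans hblock hsum_ge
      rw [le_div_iff₀ (by positivity)]
      calc 1 / (4 * m) * (m * n) = (n : ℝ) / 4 := by field_simp
        _ ≤ _ := hfinal
  exact soficWitness_amplify F hs0 hs1 W ε hε

/-! ### Countability of finite-index subgroups of a finitely generated group -/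

def permCongrHom {X Y : Type*} (e : X ≃ Y) : Equiv.Perm X →* Equiv.Perm Y where
  toFun := e.permCongr
  map_one' := permCongr_one e
  map_mul' σ τ := (permCongr_mul e σ τ).symm

lemma countable_finiteIndex_subgroups {H : Type*} [Group H] (hfg : Group.FG H) :
    Set.Countable {K : Subgroup H | K.FiniteIndex} := by
  classical
  obtain ⟨S, hSclosure, hSfin⟩ := Group.fg_iff.mp hfg
  haveI : Fintype ↥S := hSfin.fintype
  rw [← Set.countable_coe_iff]
  let T := Σ n : ℕ, (↥S → Equiv.Perm (Fin n)) × (Fin n)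
  haveI : Countable T := by infer_instance
  let emb : {K : Subgroup H // K.FiniteIndex} → T := fun K =>
    letI : K.1.FiniteIndex := K.2
    letI : Fintype (H ⧸ K.1) := K.1.fintypeQuotientOfFiniteIndex
    let e := Fintype.equivFin (H ⧸ K.1)
    ⟨Fintype.card (H ⧸ K.1),
      ((fun s => (permCongrHom e).comp (MulAction.toPermHom H (H ⧸ K.1)) s),
        e (QuotientGroup.mk 1))⟩
  let Φ : T → Subgroup H := fun t =>
    if h : ∃ φ : H →* Equiv.Perm (Fin t.1), ∀ s : ↥S, φ s = t.2.1 s then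
      Subgroup.comap (Classical.choose h)
        (MulAction.stabilizer (Equiv.Perm (Fin t.1)) t.2.2)
    else ⊥
  have hleft : ∀ K : {K : Subgroup H // K.FiniteIndex}, Φ (emb K) = K.1 := by
    intro K
    letI : K.1.FiniteIndex := K.2
    letI instF : Fintype (H ⧸ K.1) := K.1.fintypeQuotientOfFiniteIndex
    set e := Fintype.equivFin (H ⧸ K.1) with he
    set φK : H →* Equiv.Perm (Fin (Fintype.card (H ⧸ K.1))) :=
      (permCongrHom e).comp (MulAction.toPermHom H (H ⧸ K.1)) with hφK
    have hex : ∃ φ : H →* Equiv.Perm (Fin (emb K).1), ∀ s : ↥S, φ s = (emb K).2.1 s :=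
      ⟨φK, fun s => rfl⟩
    have hΦ : Φ (emb K) = Subgroup.comap (Classical.choose hex)
        (MulAction.stabilizer (Equiv.Perm (Fin (emb K).1)) (emb K).2.2) := dif_pos hex
    have hchoose : Classical.choose hex = φK := by
      apply MonoidHom.eq_of_eqOn_dense hSclosure
      intro x hx
      exact Classical.choose_spec hex ⟨x, hx⟩
    rw [hΦ, hchoose]
    ext g
    rw [Subgroup.mem_comap, MulAction.mem_stabilizer_iff]
    show φK g • (e (QuotientGroup.mk 1)) = e (QuotientGroup.mk 1) ↔ g ∈ K.1
    rw [Equiv.Perm.smul_def]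
    have happ : φK g (e (QuotientGroup.mk 1))
        = e (g • (QuotientGroup.mk 1 : H ⧸ K.1)) := by
      show (permCongrHom e) ((MulAction.toPermHom H (H ⧸ K.1)) g) (e (QuotientGroup.mk 1))
        = e (g • (QuotientGroup.mk 1 : H ⧸ K.1))
      simp [permCongrHom, Equiv.permCongr_apply]
    rw [happ, EmbeddingLike.apply_eq_iff_eq]
    have hsmul : g • (QuotientGroup.mk 1 : H ⧸ K.1) = QuotientGroup.mk g := by
      rw [MulAction.Quotient.smul_mk]
      norm_num
    rw [hsmul]
    rw [QuotientGroup.eq]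
    simp
  have hinj : Function.Injective emb := by
    intro K1 K2 hcon
    apply Subtype.ext
    rw [← hleft K1, ← hleft K2, hcon]
  exact Function.Injective.countable hinj

lemma exists_enum_normal_finiteIndex {H : Type*} [Group H] (hfg : Group.FG H) :
    ∃ M : ℕ → Subgroup H, (∀ i, (M i).Normal ∧ (M i).FiniteIndex) ∧
      (∀ K : Subgroup H, K.Normal → K.FiniteIndex → ∃ i, M i = K) := by
  have hsub : {K : Subgroup H | K.Normal ∧ K.FiniteIndex}.Countable :=
    (countable_finiteIndex_subgroups hfg).mono (fun K hK => hK.2)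
  have hne : {K : Subgroup H | K.Normal ∧ K.FiniteIndex}.Nonempty :=
    ⟨⊤, inferInstance, inferInstance⟩
  obtain ⟨M, hM⟩ := Set.Countable.exists_eq_range hsub hne
  refine ⟨M, fun i => ?_, fun K h1 h2 => ?_⟩
  · have : M i ∈ {K : Subgroup H | K.Normal ∧ K.FiniteIndex} := by
      rw [hM]; exact ⟨i, rfl⟩
    exact this
  · have : K ∈ Set.range M := by rw [← hM]; exact ⟨h1, h2⟩
    obtain ⟨i, hi⟩ := this
    exact ⟨i, hi⟩

lemma normal_inf {G : Type*} [Group G] {A B : Subgroup G} (hA : A.Normal) (hB : B.Normal) :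
    (A ⊓ B).Normal := by
  constructor
  intro n hn g
  rw [Subgroup.mem_inf] at hn ⊢
  exact ⟨hA.conj_mem _ hn.1 g, hB.conj_mem _ hn.2 g⟩

/-- A locally graded non-sofic group contains a finitely generated non-sofic subgroup `H`
with a strictly decreasing chain `H = N 0 > N 1 > ⋯` of finitely generated normal
subgroups, each non-sofic, whose intersection `R` is nontrivial, lies in the profinite
residual of `H`, and such that `H/R` is residually finite (stated elementwise: every
element of `H` outside `R` avoids a finite-index normal subgroup of `H` containing `R`). -/
theorem locallyGraded_nonSofic_chain (G : Type*) [Group G]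
    (hlg : IsLocallyGraded G) (hG : ¬ IsSofic G) :
    ∃ H : Subgroup G, H.FG ∧ ¬ IsSofic H ∧
      ∃ N : ℕ → Subgroup H,
        N 0 = ⊤ ∧ StrictAnti N ∧
        (∀ i, (N i).Normal ∧ (N i).FG ∧ ¬ IsSofic (N i)) ∧
        (⨅ i, N i) ≠ ⊥ ∧
        ((⨅ i, N i) ≤ ⨅ (K : Subgroup H) (_ : K.Normal) (_ : K.FiniteIndex), K) ∧
        (∀ h : H, h ∉ (⨅ i, N i) →
          ∃ K : Subgroup H, K.Normal ∧ K.FiniteIndex ∧ (⨅ i, N i) ≤ K ∧ h ∉ K) := by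
  classical
  -- Step 1: a finitely generated non-sofic subgroup
  have hex : ∃ H : Subgroup G, H.FG ∧ ¬ IsSofic H := by
    by_contra hcon
    push_neg at hcon
    exact hG (isSofic_of_forall_fg fun H hH => hcon H hH)
  obtain ⟨H, hHfg, hHns⟩ := hex
  haveI hHgfg : Group.FG ↥H := (Group.fg_iff_subgroup_fg H).mpr hHfg
  refine ⟨H, hHfg, hHns, ?_⟩
  -- H is not residually finite
  have hRF : ¬ (∀ h : ↥H, h ≠ 1 → ∃ K : Subgroup ↥H, K.Normal ∧ K.FiniteIndex ∧ h ∉ K) :=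
    fun hrf => hHns (isSofic_of_residuallyFinite hrf)
  -- the descent step
  have hstep : ∀ N : Subgroup ↥H, ∃ N' : Subgroup ↥H,
      N.FiniteIndex → (N' < N ∧ N'.Normal ∧ N'.FiniteIndex) := by
    intro N
    by_cases hfi : N.FiniteIndex
    swap
    · exact ⟨⊥, fun h => absurd h hfi⟩
    haveI := hfi
    -- N is nontrivial
    have hNbot : N ≠ ⊥ := by
      intro hcon
      apply hRF
      intro h hne
      refine ⟨⊥, inferInstance, ?_, ?_⟩
      · rw [← hcon]; exact hfi
      · simpa using hne
    -- N is finitely generated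
    haveI : Group.FG ↥N := Subgroup.fg_of_index_ne_zero N
    -- push to G and apply local gradedness
    set NG : Subgroup G := N.map H.subtype with hNG
    have hNGbot : NG ≠ ⊥ := by
      intro hcon
      exact hNbot ((Subgroup.map_eq_bot_iff_of_injective N H.subtype_injective).mp hcon)
    set e : ↥N ≃* ↥NG := Subgroup.equivMapOfInjective N H.subtype H.subtype_injective with he
    haveI : Group.FG ↥NG := Group.fg_of_surjective (f := e.toMonoidHom) e.surjective
    have hNGfg : NG.FG := (Group.fg_iff_subgroup_fg NG).mp inferInstance
    obtain ⟨Kg, hKgtop, hKgfi⟩ := hlg NG hNGbot hNGfg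
    -- pull back to a subgroup of N
    set K' : Subgroup ↥N := Kg.comap e.toMonoidHom with hK'
    haveI hK'fi : K'.FiniteIndex := by
      constructor
      rw [hK', Subgroup.index_comap_of_surjective _ e.surjective]
      exact hKgfi.index_ne_zero
    have hK'top : K' ≠ ⊤ := by
      intro hcon
      apply hKgtop
      rw [eq_top_iff]
      intro x _
      obtain ⟨y, hy⟩ := e.surjective x
      have : y ∈ K' := by rw [hcon]; exact Subgroup.mem_top y
      rw [hK', Subgroup.mem_comap] at this
      have h2 : e y ∈ Kg := this
      rw [hy] at h2
      exact h2
    -- move to a subgroup of H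
    set K'' : Subgroup ↥H := K'.map N.subtype with hK''
    have hK''le : K'' ≤ N := Subgroup.map_subtype_le K'
    have hK''lt : K'' < N := by
      rcases lt_or_eq_of_le hK''le with h | h
      · exact h
      · exfalso
        apply hK'top
        rw [eq_top_iff]
        intro x _
        have hx : (x : ↥H) ∈ K'' := by rw [h]; exact x.2
        rw [hK''] at hx
        obtain ⟨y, hy, hyx⟩ := hx
        have : y = x := Subtype.ext hyx
        rwa [← this]
    haveI hK''fi : K''.FiniteIndex := by
      constructor
      rw [← Subgroup.relIndex_mul_index hK''le]
      apply Nat.mul_ne_zero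
      · have : K''.relIndex N = K'.index := by
          rw [Subgroup.relIndex, hK'']
          congr 1
          rw [Subgroup.subgroupOf, Subgroup.comap_map_eq_self_of_injective N.subtype_injective]
        rw [this]
        exact hK'fi.index_ne_zero
      · exact hfi.index_ne_zero
    refine ⟨K''.normalCore, fun _ => ⟨?_, inferInstance, inferInstance⟩⟩
    exact lt_of_le_of_lt K''.normalCore_le hK''lt
  choose step hstepspec using hstep
  -- enumeration of normal finite-index subgroups
  obtain ⟨M, hMprop, hMsurj⟩ := exists_enum_normal_finiteIndex hHgfg
  -- the chain
  set N : ℕ → Subgroup ↥H := (fun i => Nat.rec ⊤ (fun j Nj => step Nj ⊓ M j) i) with hN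
  have hN0 : N 0 = ⊤ := rfl
  have hNsucc : ∀ j, N (j + 1) = step (N j) ⊓ M j := fun j => rfl
  have hNfi : ∀ i, (N i).FiniteIndex := by
    intro i
    induction i with
    | zero => rw [hN0]; infer_instance
    | succ j ih =>
        rw [hNsucc]
        haveI := ih
        haveI := (hstepspec (N j) ih).2.2
        haveI := (hMprop j).2
        infer_instance
  have hNlt : ∀ j, N (j + 1) < N j := by
    intro j
    rw [hNsucc]
    exact lt_of_le_of_lt inf_le_left (hstepspec (N j) (hNfi j)).1
  have hNnormal : ∀ i, (N i).Normal := by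
    intro i
    induction i with
    | zero => rw [hN0]; infer_instance
    | succ j ih =>
        rw [hNsucc]
        exact normal_inf (hstepspec (N j) (hNfi j)).2.1 (hMprop j).1
  refine ⟨N, hN0, strictAnti_nat_of_succ_lt hNlt, ?_, ?_, ?_, ?_⟩
  · -- each N i is normal, f.g., non-sofic
    intro i
    haveI := hNfi i
    refine ⟨hNnormal i, ?_, ?_⟩
    · haveI : Group.FG ↥(N i) := Subgroup.fg_of_index_ne_zero (N i)
      exact (Group.fg_iff_subgroup_fg (N i)).mp inferInstance
    · intro hsofic
      exact hHns (isSofic_of_finiteIndex (N i) hsofic)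
  · -- the intersection is nontrivial
    intro hcon
    apply hRF
    intro h hne
    have : ¬ (∀ i, h ∈ N i) := by
      intro hall
      have : h ∈ ⨅ i, N i := Subgroup.mem_iInf.mpr hall
      rw [hcon] at this
      exact hne (Subgroup.mem_bot.mp this)
    push_neg at this
    obtain ⟨i, hi⟩ := this
    exact ⟨N i, hNnormal i, hNfi i, hi⟩
  · -- contained in the profinite residual
    apply le_iInf
    intro K
    apply le_iInf
    intro hKn
    apply le_iInf
    intro hKfi
    obtain ⟨j, hj⟩ := hMsurj K hKn hKfi
    calc ⨅ i, N i ≤ N (j + 1) := iInf_le N (j + 1)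
      _ ≤ M j := by rw [hNsucc]; exact inf_le_right
      _ = K := hj
  · -- elementwise residual finiteness of H / R
    intro h hh
    have : ¬ (∀ i, h ∈ N i) := fun hall => hh (Subgroup.mem_iInf.mpr hall)
    push_neg at this
    obtain ⟨i, hi⟩ := this
    exact ⟨N i, hNnormal i, hNfi i, iInf_le N i, hi⟩
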